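/- Let X be a wep-connected space and x₀ ∈ X. Then the evaluation map ev₁ : (𝒫X)_{x₀} → X sending α to α(1) is a quotient map. -/

import Mathlib

open unitInterval Topology

/-- A path `α` is well-targeted if every neighborhood `U` of `α` in the space of paths
starting at `α 0` admits an open neighborhood `V` of `α 1` each of whose points is the
endpoint of some path in `U`. -/
def IsWellTargeted {X : Type*} [TopologicalSpace X] (α : C(I, X)) : Prop :=
  ∀ U : Set {β : C(I, X) // β 0 = α 0}, IsOpen U →
    (⟨α, rfl⟩ : {β : C(I, X) // β 0 = α 0}) ∈ U →
    ∃ V : Set X, IsOpen V ∧ α 1 ∈ V ∧ ∀ b ∈ V, ∃ β ∈ U, β.1 1 = b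

/-- A path `α` is well-ended if every neighborhood `U` of `α` in `𝒫X` admits open
neighborhoods `V₀, V₁` of `α 0, α 1` such that every pair `(a, b) ∈ V₀ × V₁` is joined
by a path in `U`. -/
def IsWellEnded {X : Type*} [TopologicalSpace X] (α : C(I, X)) : Prop :=
  ∀ U : Set C(I, X), IsOpen U → α ∈ U →
    ∃ V₀ V₁ : Set X, IsOpen V₀ ∧ IsOpen V₁ ∧ α 0 ∈ V₀ ∧ α 1 ∈ V₁ ∧
      ∀ a ∈ V₀, ∀ b ∈ V₁, ∃ β ∈ U, β 0 = a ∧ β 1 = b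

/-- A space is wep-connected if every pair of its points is joined by a well-ended path. -/
def WepConnected (X : Type*) [TopologicalSpace X] : Prop :=
  ∀ x y : X, ∃ α : C(I, X), α 0 = x ∧ α 1 = y ∧ IsWellEnded α

/-- If `X` is wep-connected, evaluation at `1` from the space of paths starting at `x₀`
to `X` is a quotient map. -/
theorem wepConnected_ev1_isQuotientMap {X : Type*} [TopologicalSpace X]
    (hX : WepConnected X) (x₀ : X) :
    IsQuotientMap (fun α : {α : C(I, X) // α 0 = x₀} => α.1 1) := by
  simp_rw [isQuotientMap_iff, isCoinducing_iff, and_comm, iff_comm]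
  constructor
  · intro y
    obtain ⟨α, h0, h1, -⟩ := hX x₀ y
    exact ⟨⟨α, h0⟩, h1⟩
  · intro s
    constructor
    · intro hs
      exact hs.preimage ((ContinuousEvalConst.continuous_eval_const 1).comp continuous_subtype_val)
    · intro hs
      rw [isOpen_iff_forall_mem_open]
      intro y hy
      obtain ⟨α, h0, h1, hwe⟩ := hX x₀ y
      obtain ⟨W, hW, hWeq⟩ := isOpen_induced_iff.mp hs
      have hαW : α ∈ W := by
        have : (⟨α, h0⟩ : {α : C(I, X) // α 0 = x₀}) ∈
            Subtype.val ⁻¹' W := by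
          rw [hWeq]; show α 1 ∈ s; rw [h1]; exact hy
        exact this
      obtain ⟨V₀, V₁, hV₀, hV₁, hm0, hm1, hjoin⟩ := hwe W hW hαW
      refine ⟨V₁, ?_, hV₁, h1 ▸ hm1⟩
      intro b hb
      obtain ⟨β, hβW, hβ0, hβ1⟩ := hjoin x₀ (h0 ▸ hm0) b hb
      have : (⟨β, hβ0⟩ : {α : C(I, X) // α 0 = x₀}) ∈ Subtype.val ⁻¹' W := hβW
      rw [hWeq] at this
      simpa [hβ1] using this
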